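/- arXiv:1910.09337 — 5 statements merged into one kernel-verified Lean document; each statement's English description precedes it below -/
import Mathlib

section
/- If for every (u,i) ∈ D either the propensity is accurate (p̂_{u,i} = p_{u,i}) or the imputed error is accurate (ê_{u,i} = e_{u,i}), then the doubly robust estimator E^DR = (1/|D|) Σ_{(u,i)∈D} ( ê_{u,i} + o_{u,i}(e_{u,i} − ê_{u,i})/p̂_{u,i} ) is unbiased: E_O[E^DR] = (1/|D|) Σ_{(u,i)∈D} e_{u,i}. -/
open Finset

/-- Expectation over independent Bernoulli observation indicators. -/
noncomputable def expVal {D : Type*} [Fintype D] [DecidableEq D] (p : D → ℝ) (f : (D → Bool) → ℝ) : ℝ :=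
  ∑ o : D → Bool, (∏ d, if o d then p d else 1 - p d) * f o

lemma sum_prod_bool {D : Type*} [Fintype D] [DecidableEq D] (w : D → Bool → ℝ) :
    ∑ o : D → Bool, ∏ d, w d (o d) = ∏ d, (w d true + w d false) := by
  rw [← Fintype.piFinset_univ, ← Finset.prod_univ_sum]
  congr 1; ext d; rw [Fintype.sum_bool]

lemma exp_single {D : Type*} [Fintype D] [DecidableEq D] (p : D → ℝ) (d0 : D) (g : Bool → ℝ) :
    ∑ o : D → Bool, (∏ d, if o d then p d else 1 - p d) * g (o d0)
      = p d0 * g true + (1 - p d0) * g false := by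
  have h : ∀ o : D → Bool,
      (∏ d, if o d then p d else 1 - p d) * g (o d0)
        = ∏ d, ((if o d then p d else 1 - p d) * (if d = d0 then g (o d) else 1)) := by
    intro o
    rw [Finset.prod_mul_distrib, Finset.prod_ite_eq' Finset.univ d0 (fun d => g (o d))]
    simp
  rw [Finset.sum_congr rfl (fun o _ => h o),
    sum_prod_bool (fun d b => (if b then p d else 1 - p d) * (if d = d0 then g b else 1))]
  rw [Finset.prod_eq_single d0 (fun d _ hd => by simp [hd]) (by simp)]
  simp

/-- If for every entry either the propensity or the imputed error is accurate,
the doubly robust estimator is unbiased. -/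
theorem dr_unbiased {D : Type*} [Fintype D] [DecidableEq D] [Nonempty D]
    (e ehat p phat : D → ℝ)
    (hp : ∀ d, 0 < p d ∧ p d ≤ 1) (hphat : ∀ d, 0 < phat d)
    (hacc : ∀ d, phat d = p d ∨ ehat d = e d) :
    expVal p (fun o => (Fintype.card D : ℝ)⁻¹ *
        ∑ d, (ehat d + (if o d then (1 : ℝ) else 0) * (e d - ehat d) / phat d))
      = (Fintype.card D : ℝ)⁻¹ * ∑ d, e d := by
  unfold expVal
  have key : ∀ d0 : D,
      ∑ o : D → Bool, (∏ d, if o d then p d else 1 - p d) *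
        (ehat d0 + (if o d0 then (1 : ℝ) else 0) * (e d0 - ehat d0) / phat d0) = e d0 := by
    intro d0
    rw [exp_single p d0 (fun b => ehat d0 + (if b then (1 : ℝ) else 0) * (e d0 - ehat d0) / phat d0)]
    simp only [if_true, Bool.false_eq_true, if_false, one_mul, zero_mul, zero_div, add_zero]
    rcases hacc d0 with h | h
    · rw [h]
      field_simp [(hp d0).1.ne']
      ring
    · rw [h]
      ring
  have h2 : (∑ d, e d) = ∑ d0, ∑ o : D → Bool,
      (∏ d, if o d then p d else 1 - p d) *
        (ehat d0 + (if o d0 then (1 : ℝ) else 0) * (e d0 - ehat d0) / phat d0) :=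
    Finset.sum_congr rfl fun d0 _ => (key d0).symm
  rw [h2]
  simp only [Finset.mul_sum]
  rw [Finset.sum_comm]
  exact Finset.sum_congr rfl fun d0 _ => Finset.sum_congr rfl fun o _ => by ring
end

section
/- The bias of the doubly robust estimator equals (1/|D|) |Σ_{(u,i)∈D} Δ_{u,i} δ_{u,i}|, where Δ_{u,i} = (p_{u,i} − p̂_{u,i})/p̂_{u,i} and δ_{u,i} = e_{u,i} − ê_{u,i}. That is, |E_O[E^DR] − P| = (1/|D|) |Σ_{(u,i)∈D} Δ_{u,i} δ_{u,i}|. -/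
open Finset

lemma sum_pi_prod {D : Type*} [Fintype D] [DecidableEq D] (g : D → Bool → ℝ) :
    ∑ o : D → Bool, ∏ d, g d (o d) = ∏ d, (g d true + g d false) := by
  have h := Finset.prod_univ_sum (fun _ : D => (Finset.univ : Finset Bool)) g
  simp [Fintype.sum_bool] at h
  exact h.symm

lemma exp_one {D : Type*} [Fintype D] [DecidableEq D] (p : D → ℝ) :
    ∑ o : D → Bool, (∏ d, if o d then p d else 1 - p d) = 1 := by
  rw [sum_pi_prod (fun d b => if b then p d else 1 - p d)]
  simp

lemma exp_ind {D : Type*} [Fintype D] [DecidableEq D] (p : D → ℝ) (d : D) :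
    ∑ o : D → Bool, (∏ d', if o d' then p d' else 1 - p d') * (if o d then (1:ℝ) else 0)
      = p d := by
  have key : ∀ o : D → Bool,
      (∏ d', if o d' then p d' else 1 - p d') * (if o d then (1:ℝ) else 0)
      = ∏ d', (if d' = d then (if o d' then p d' else 0)
          else (if o d' then p d' else 1 - p d')) := by
    intro o
    rw [← Finset.mul_prod_erase univ (fun d' => if d' = d then (if o d' then p d' else 0)
          else (if o d' then p d' else 1 - p d')) (mem_univ d),
        ← Finset.mul_prod_erase univ
          (fun d' => (if o d' then p d' else 1 - p d')) (mem_univ d)]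
    have h1 : ∏ d' ∈ univ.erase d,
        (if d' = d then (if o d' then p d' else 0)
          else (if o d' then p d' else 1 - p d'))
        = ∏ d' ∈ univ.erase d, (if o d' then p d' else 1 - p d') := by
      refine Finset.prod_congr rfl fun x hx => ?_
      simp [Finset.ne_of_mem_erase hx]
    rw [h1]
    simp only [if_pos rfl]
    cases h : o d <;> simp
  rw [Finset.sum_congr rfl (fun o _ => key o)]
  have hs := sum_pi_prod (fun d' b => if d' = d then (if b then p d' else 0)
      else (if b then p d' else 1 - p d'))
  simp only at hs
  rw [hs]
  simp
  have h2 : ∀ x : D, ((p x + if x = d then (0:ℝ) else 1 - p x)) = if x = d then p x else 1 := by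
    intro x; split <;> ring
  simp_rw [h2]
  simp [Finset.prod_ite_eq']


/-- The bias of the doubly robust estimator equals `(1/|D|)|Σ Δ δ|`. -/
theorem dr_bias {D : Type*} [Fintype D] [DecidableEq D] [Nonempty D]
    (e ehat p phat : D → ℝ)
    (hp : ∀ d, 0 < p d ∧ p d ≤ 1) (hphat : ∀ d, 0 < phat d) :
    |expVal p (fun o => (Fintype.card D : ℝ)⁻¹ *
        ∑ d, (ehat d + (if o d then (1 : ℝ) else 0) * (e d - ehat d) / phat d))
      - (Fintype.card D : ℝ)⁻¹ * ∑ d, e d|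
    = (Fintype.card D : ℝ)⁻¹ *
        |∑ d, ((p d - phat d) / phat d) * (e d - ehat d)| := by
  unfold expVal
  set c := (Fintype.card D : ℝ)⁻¹ with hc
  have hcpos : 0 < c := by
    rw [hc]
    positivity
  have step1 : ∀ o : D → Bool,
      (∏ d, if o d then p d else 1 - p d) * (c *
        ∑ d, (ehat d + (if o d then (1 : ℝ) else 0) * (e d - ehat d) / phat d))
      = c * ∑ d, ((∏ d', if o d' then p d' else 1 - p d') * ehat d
          + ((∏ d', if o d' then p d' else 1 - p d') * (if o d then (1:ℝ) else 0))
            * ((e d - ehat d) / phat d)) := by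
    intro o
    rw [mul_left_comm]
    congr 1
    rw [Finset.mul_sum]
    exact Finset.sum_congr rfl fun d _ => by ring
  rw [Finset.sum_congr rfl (fun o _ => step1 o), ← Finset.mul_sum, Finset.sum_comm]
  have step2 : ∀ d : D,
      ∑ o : D → Bool, ((∏ d', if o d' then p d' else 1 - p d') * ehat d
          + ((∏ d', if o d' then p d' else 1 - p d') * (if o d then (1:ℝ) else 0))
            * ((e d - ehat d) / phat d))
      = ehat d + p d * ((e d - ehat d) / phat d) := by
    intro d
    rw [Finset.sum_add_distrib, ← Finset.sum_mul, ← Finset.sum_mul, exp_one, exp_ind, one_mul]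
  rw [Finset.sum_congr rfl (fun d _ => step2 d), ← mul_sub, ← Finset.sum_sub_distrib]
  have step3 : ∀ d : D,
      ehat d + p d * ((e d - ehat d) / phat d) - e d
      = ((p d - phat d) / phat d) * (e d - ehat d) := by
    intro d
    have h := (hphat d).ne'
    field_simp
    ring
  rw [Finset.sum_congr rfl (fun d _ => step3 d), abs_mul, abs_of_pos hcpos]
end

section
/- If the imputed errors satisfy 0 ≤ ê_{u,i} ≤ 2 e_{u,i} for all (u,i), then the per-entry bias contribution of the doubly robust estimator is no larger than that of the IPW estimator: for each (u,i), |p_{u,i} − p̂_{u,i}| · |e_{u,i} − ê_{u,i}| / p̂_{u,i} ≤ |p_{u,i} − p̂_{u,i}| · e_{u,i} / p̂_{u,i}; consequently the DR bias bound (1/|D|) Σ |Δ_{u,i} δ_{u,i}| is at most the IPW bias bound (1/|D|) Σ |Δ_{u,i}| e_{u,i}. -/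
open Finset

/-- If `0 ≤ ê ≤ 2e`, the per-entry DR bias contribution is no larger than the IPW one,
and consequently the DR bias bound is at most the IPW bias bound. -/
theorem dr_bias_le_ipw_bias {D : Type*} [Fintype D] [Nonempty D]
    (e ehat p phat : D → ℝ)
    (he : ∀ d, 0 ≤ e d) (hehat : ∀ d, 0 ≤ ehat d ∧ ehat d ≤ 2 * e d)
    (hp : ∀ d, 0 < p d ∧ p d ≤ 1) (hphat : ∀ d, 0 < phat d) :
    (∀ d, |p d - phat d| * |e d - ehat d| / phat d ≤ |p d - phat d| * e d / phat d) ∧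
    (Fintype.card D : ℝ)⁻¹ * ∑ d, |((p d - phat d) / phat d) * (e d - ehat d)|
      ≤ (Fintype.card D : ℝ)⁻¹ * ∑ d, |(p d - phat d) / phat d| * e d := by
  have key : ∀ d, |e d - ehat d| ≤ e d := by
    intro d
    rcases hehat d with ⟨h1, h2⟩
    rw [abs_le]
    constructor <;> linarith
  constructor
  · intro d
    have h1 : |p d - phat d| * |e d - ehat d| ≤ |p d - phat d| * e d :=
      mul_le_mul_of_nonneg_left (key d) (abs_nonneg _)
    exact div_le_div_of_nonneg_right h1 (hphat d).le
  · apply mul_le_mul_of_nonneg_left _ (by positivity)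
    apply Finset.sum_le_sum
    intro d _
    rw [abs_mul]
    exact mul_le_mul_of_nonneg_left (key d) (abs_nonneg _)
end

section
/- The variance of the doubly robust estimator with accurate propensities equals (1/|D|²) Σ_{(u,i)∈D} δ_{u,i}² (1 − p_{u,i})/p_{u,i}, where δ_{u,i} = e_{u,i} − ê_{u,i}. In particular, if |δ_{u,i}| ≤ |e_{u,i}| for all (u,i), the DR variance is at most the IPW variance. -/
open Finset

/-- Variance over independent Bernoulli observation indicators. -/
noncomputable def varVal {D : Type*} [Fintype D] [DecidableEq D] (p : D → ℝ) (f : (D → Bool) → ℝ) : ℝ :=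
  expVal p (fun o => (f o - expVal p f) ^ 2)

section Aux
variable {D : Type*} [Fintype D] [DecidableEq D] (p : D → ℝ)

lemma sum_bool_pi (h : D → Bool → ℝ) :
    ∑ o : D → Bool, ∏ d, h d (o d) = ∏ d, ∑ b, h d b := by
  rw [Finset.prod_univ_sum, Fintype.piFinset_univ]

lemma expVal_prod (g : D → Bool → ℝ) :
    expVal p (fun o => ∏ d, g d (o d)) =
      ∏ d, (p d * g d true + (1 - p d) * g d false) := by
  unfold expVal
  have h1 : ∀ o : D → Bool,
      (∏ d, if o d then p d else 1 - p d) * (∏ d, g d (o d))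
        = ∏ d, ((if o d then p d else 1 - p d) * g d (o d)) := by
    intro o; rw [Finset.prod_mul_distrib]
  simp_rw [h1]
  rw [sum_bool_pi (fun d b => (if b then p d else 1 - p d) * g d b)]
  simp [Fintype.sum_bool]

lemma expVal_sum {ι : Type*} (s : Finset ι) (F : ι → (D → Bool) → ℝ) :
    expVal p (fun o => ∑ i ∈ s, F i o) = ∑ i ∈ s, expVal p (F i) := by
  unfold expVal
  rw [Finset.sum_comm]
  simp [Finset.mul_sum]

lemma expVal_add (f g : (D → Bool) → ℝ) :
    expVal p (fun o => f o + g o) = expVal p f + expVal p g := by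
  unfold expVal
  rw [← Finset.sum_add_distrib]
  congr 1; funext o; ring

lemma expVal_total : ∑ o : D → Bool, (∏ d, if o d then p d else 1 - p d) = 1 := by
  rw [sum_bool_pi (fun d b => if b then p d else 1 - p d)]
  simp

lemma expVal_const (c : ℝ) : expVal p (fun _ => c) = c := by
  unfold expVal
  rw [← Finset.sum_mul, expVal_total, one_mul]

lemma expVal_smul (k : ℝ) (f : (D → Bool) → ℝ) :
    expVal p (fun o => k * f o) = k * expVal p f := by
  unfold expVal
  rw [Finset.mul_sum]
  congr 1; funext o; ring

lemma expVal_single (a : ℝ) (d0 : D) :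
    expVal p (fun o => a * (if o d0 then (1:ℝ) else 0)) = a * p d0 := by
  have h := expVal_prod p (fun d b => if d = d0 then a * (if b then (1:ℝ) else 0) else 1)
  simp only [Finset.prod_ite_eq', Finset.mem_univ, if_true] at h
  rw [h, Finset.prod_eq_single d0]
  · simp [mul_comm]
  · intro b _ hb; simp [hb]
  · simp

lemma expVal_YY (d1 d2 : D) :
    expVal p (fun o => ((if o d1 then (1:ℝ) else 0) - p d1) * ((if o d2 then (1:ℝ) else 0) - p d2))
      = if d1 = d2 then p d1 * (1 - p d1) else 0 := by
  by_cases h : d1 = d2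
  · subst h
    have h2 : (fun o : D → Bool => ((if o d1 then (1:ℝ) else 0) - p d1) * ((if o d1 then (1:ℝ) else 0) - p d1))
        = (fun o : D → Bool => ∏ d, (fun d b => if d = d1 then ((if b then (1:ℝ) else 0) - p d1)^2 else 1) d (o d)) := by
      funext o
      rw [Finset.prod_ite_eq']
      simp only [Finset.mem_univ, if_true]
      ring
    rw [h2, expVal_prod p (fun d b => if d = d1 then ((if b then (1:ℝ) else 0) - p d1)^2 else 1), Finset.prod_eq_single d1]
    · simp; ring
    · intro b _ hb; simp [hb]
    · simp
  · have h2 : (fun o : D → Bool => ((if o d1 then (1:ℝ) else 0) - p d1) * ((if o d2 then (1:ℝ) else 0) - p d2))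
        = (fun o : D → Bool => ∏ d, (fun d b =>
            (if d = d1 then ((if b then (1:ℝ) else 0) - p d1) else 1) *
            (if d = d2 then ((if b then (1:ℝ) else 0) - p d2) else 1)) d (o d)) := by
      funext o
      rw [Finset.prod_mul_distrib]
      simp only [Finset.prod_ite_eq', Finset.mem_univ, if_true]
    rw [h2, expVal_prod p (fun d b =>
      (if d = d1 then ((if b then (1:ℝ) else 0) - p d1) else 1) *
      (if d = d2 then ((if b then (1:ℝ) else 0) - p d2) else 1)), if_neg h]
    apply Finset.prod_eq_zero (Finset.mem_univ d1)
    simp [h]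
    ring

/-- Variance of an affine function of independent Bernoulli indicators. -/
lemma var_affine (c : ℝ) (a : D → ℝ) :
    varVal p (fun o => c + ∑ d, a d * (if o d then (1:ℝ) else 0))
      = ∑ d, (a d)^2 * (p d * (1 - p d)) := by
  have hmean : expVal p (fun o => c + ∑ d, a d * (if o d then (1:ℝ) else 0))
      = c + ∑ d, a d * p d := by
    rw [expVal_add p (fun _ => c) (fun o => ∑ d, a d * (if o d then (1:ℝ) else 0)),
      expVal_const, expVal_sum]
    simp_rw [expVal_single]
  unfold varVal
  rw [hmean]
  have hfun : (fun o : D → Bool =>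
      (c + ∑ d, a d * (if o d then (1:ℝ) else 0) - (c + ∑ d, a d * p d)) ^ 2)
      = fun o => ∑ d1, ∑ d2, (a d1 * a d2) *
          (((if o d1 then (1:ℝ) else 0) - p d1) * ((if o d2 then (1:ℝ) else 0) - p d2)) := by
    funext o
    have hc : c + ∑ d, a d * (if o d then (1:ℝ) else 0) - (c + ∑ d, a d * p d)
        = ∑ d, a d * ((if o d then (1:ℝ) else 0) - p d) := by
      rw [add_sub_add_left_eq_sub, ← Finset.sum_sub_distrib]
      exact Finset.sum_congr rfl (fun d _ => by ring)
    rw [hc, sq, Finset.sum_mul_sum]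
    apply Finset.sum_congr rfl; intro d1 _
    apply Finset.sum_congr rfl; intro d2 _
    ring
  rw [hfun, expVal_sum]
  have : ∀ d1 : D, expVal p (fun o => ∑ d2, (a d1 * a d2) *
      (((if o d1 then (1:ℝ) else 0) - p d1) * ((if o d2 then (1:ℝ) else 0) - p d2)))
      = ∑ d2, (a d1 * a d2) * expVal p
        (fun o => ((if o d1 then (1:ℝ) else 0) - p d1) * ((if o d2 then (1:ℝ) else 0) - p d2)) := by
    intro d1
    rw [expVal_sum]
    exact Finset.sum_congr rfl (fun d2 _ => expVal_smul p _ _)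
  simp_rw [this, expVal_YY, mul_ite, mul_zero]
  simp [sq]

end Aux

/-- The variance of the DR estimator with accurate propensities equals
`(1/|D|²) Σ δ² (1-p)/p`; if `|δ| ≤ |e|` entrywise it is at most the IPW variance. -/
theorem dr_variance {D : Type*} [Fintype D] [DecidableEq D] [Nonempty D]
    (e ehat p : D → ℝ) (hp : ∀ d, 0 < p d ∧ p d ≤ 1) :
    varVal p (fun o => (Fintype.card D : ℝ)⁻¹ *
        ∑ d, (ehat d + (if o d then (1 : ℝ) else 0) * (e d - ehat d) / p d))
      = ((Fintype.card D : ℝ) ^ 2)⁻¹ * ∑ d, (e d - ehat d) ^ 2 * (1 - p d) / p d ∧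
    ((∀ d, |e d - ehat d| ≤ |e d|) →
      varVal p (fun o => (Fintype.card D : ℝ)⁻¹ *
          ∑ d, (ehat d + (if o d then (1 : ℝ) else 0) * (e d - ehat d) / p d))
        ≤ varVal p (fun o => (Fintype.card D : ℝ)⁻¹ *
            ∑ d, (if o d then (1 : ℝ) else 0) * e d / p d)) := by
  set n : ℝ := (Fintype.card D : ℝ) with hn
  have hn0 : n ≠ 0 := by
    simp [hn, Fintype.card_ne_zero]
  have hDRfun : (fun o : D → Bool => n⁻¹ *
      ∑ d, (ehat d + (if o d then (1 : ℝ) else 0) * (e d - ehat d) / p d))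
      = fun o => (n⁻¹ * ∑ d, ehat d) +
          ∑ d, ((e d - ehat d) / p d * n⁻¹) * (if o d then (1:ℝ) else 0) := by
    funext o
    rw [Finset.sum_add_distrib, mul_add]
    congr 1
    rw [Finset.mul_sum]
    exact Finset.sum_congr rfl (fun d _ => by ring)
  have hIPWfun : (fun o : D → Bool => n⁻¹ *
      ∑ d, (if o d then (1 : ℝ) else 0) * e d / p d)
      = fun o => (0:ℝ) + ∑ d, (e d / p d * n⁻¹) * (if o d then (1:ℝ) else 0) := by
    funext o
    rw [zero_add, Finset.mul_sum]
    exact Finset.sum_congr rfl (fun d _ => by ring)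
  have hDR : varVal p (fun o : D → Bool => n⁻¹ *
      ∑ d, (ehat d + (if o d then (1 : ℝ) else 0) * (e d - ehat d) / p d))
      = ∑ d, ((e d - ehat d) / p d * n⁻¹)^2 * (p d * (1 - p d)) := by
    rw [hDRfun, var_affine]
  have hIPW : varVal p (fun o : D → Bool => n⁻¹ *
      ∑ d, (if o d then (1 : ℝ) else 0) * e d / p d)
      = ∑ d, (e d / p d * n⁻¹)^2 * (p d * (1 - p d)) := by
    rw [hIPWfun, var_affine]
  constructor
  · rw [hDR, Finset.mul_sum]
    apply Finset.sum_congr rfl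
    intro d _
    have hpd : p d ≠ 0 := (hp d).1.ne'
    field_simp
  · intro habs
    rw [hDR, hIPW]
    apply Finset.sum_le_sum
    intro d _
    have h1 : ∀ x : ℝ, (x / p d * n⁻¹)^2 * (p d * (1 - p d))
        = x^2 * ((1 / p d)^2 * n⁻¹^2 * (p d * (1 - p d))) := by
      intro x; ring
    rw [h1, h1]
    apply mul_le_mul_of_nonneg_right
    · calc (e d - ehat d)^2 = |e d - ehat d|^2 := (sq_abs _).symm
        _ ≤ |e d|^2 := by
            apply pow_le_pow_left₀ (abs_nonneg _) (habs d)
        _ = (e d)^2 := sq_abs _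
    · have h2 := (hp d).1
      have h3 := (hp d).2
      apply mul_nonneg (mul_nonneg (sq_nonneg _) (sq_nonneg _))
      exact mul_nonneg h2.le (by linarith)
end

section
/- The expectation of the clipped IPW estimator with accurate propensities deviates from P by at most (1/|D|) Σ_{(u,i): p_{u,i} < τ} e_{u,i} (τ − p_{u,i})/τ; in particular, if p_{u,i} ≥ τ for all (u,i), the clipped IPW estimator with accurate propensities is unbiased. -/
open Finset

lemma expVal_coord {D : Type*} [Fintype D] [DecidableEq D] (p : D → ℝ) (d0 : D) :
    ∑ o : D → Bool, (∏ d, if o d then p d else 1 - p d) * (if o d0 then (1:ℝ) else 0)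
      = p d0 := by
  classical
  have h1 : ∀ o : D → Bool,
      (∏ d, if o d then p d else 1 - p d) * (if o d0 then (1:ℝ) else 0)
      = ∏ d, ((if o d then p d else 1 - p d) *
          (if d = d0 then (if o d then (1:ℝ) else 0) else 1)) := by
    intro o
    rw [Finset.prod_mul_distrib]
    congr 1
    rw [Finset.prod_ite_eq' univ d0 (fun d => (if o d then (1:ℝ) else 0))]
    simp
  simp only [h1]
  rw [← Fintype.prod_sum (fun d (b : Bool) =>
    (if b then p d else 1 - p d) * (if d = d0 then (if b then (1:ℝ) else 0) else 1))]
  rw [Finset.prod_eq_single d0]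
  · simp
  · intro d _ hd
    simp [hd]
  · simp

open Classical in
/-- The expectation of the clipped IPW estimator with accurate propensities deviates from `P`
by at most `(1/|D|) Σ_{p < τ} e (τ - p)/τ`; if no propensity is below `τ`, it is unbiased. -/
theorem clipped_ipw_bias_bound {D : Type*} [Fintype D] [DecidableEq D] [Nonempty D]
    (e p : D → ℝ) (he : ∀ d, 0 ≤ e d) (hp : ∀ d, 0 < p d ∧ p d ≤ 1)
    (τ : ℝ) (hτ : 0 < τ ∧ τ ≤ 1) :
    |expVal p (fun o => (Fintype.card D : ℝ)⁻¹ *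
        ∑ d, (if o d then (1 : ℝ) else 0) * e d / max (p d) τ)
      - (Fintype.card D : ℝ)⁻¹ * ∑ d, e d|
      ≤ (Fintype.card D : ℝ)⁻¹ *
          ∑ d ∈ univ.filter (fun d => p d < τ), e d * (τ - p d) / τ ∧
    ((∀ d, τ ≤ p d) →
      expVal p (fun o => (Fintype.card D : ℝ)⁻¹ *
          ∑ d, (if o d then (1 : ℝ) else 0) * e d / max (p d) τ)
        = (Fintype.card D : ℝ)⁻¹ * ∑ d, e d) := by
  set c : ℝ := (Fintype.card D : ℝ)⁻¹ with hc
  have hc0 : 0 ≤ c := by positivity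
  -- exact value of the expectation
  have hE : expVal p (fun o => c * ∑ d, (if o d then (1 : ℝ) else 0) * e d / max (p d) τ)
      = c * ∑ d, p d * (e d / max (p d) τ) := by
    unfold expVal
    have h1 : ∀ o : D → Bool,
        (∏ d, if o d then p d else 1 - p d) *
          (c * ∑ d, (if o d then (1 : ℝ) else 0) * e d / max (p d) τ)
        = ∑ d, c * (e d / max (p d) τ) *
            ((∏ d', if o d' then p d' else 1 - p d') * (if o d then (1:ℝ) else 0)) := by
      intro o
      rw [Finset.mul_sum, Finset.mul_sum]
      exact Finset.sum_congr rfl fun d _ => by ring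
    simp only [h1]
    rw [show (∑ o : D → Bool, ∑ d : D, c * (e d / max (p d) τ) *
          ((∏ d', if o d' then p d' else 1 - p d') * (if o d then (1:ℝ) else 0)))
        = ∑ d : D, ∑ o : D → Bool, c * (e d / max (p d) τ) *
          ((∏ d', if o d' then p d' else 1 - p d') * (if o d then (1:ℝ) else 0))
      from Finset.sum_comm, Finset.mul_sum]
    refine Finset.sum_congr rfl fun d _ => ?_
    rw [← Finset.mul_sum, expVal_coord]
    ring
  -- the per-term difference
  have hterm : ∀ d, p d * (e d / max (p d) τ) - e d
      = if p d < τ then -(e d * (τ - p d) / τ) else 0 := by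
    intro d
    by_cases h : p d < τ
    · have hm : max (p d) τ = τ := max_eq_right h.le
      rw [hm]
      simp only [h, if_true]
      field_simp [ne_of_gt hτ.1]
      ring
    · have hm : max (p d) τ = p d := max_eq_left (not_lt.mp h)
      rw [hm]
      simp only [h, if_false]
      field_simp [ne_of_gt (hp d).1]
      ring
  -- the difference equals -c * bound
  have hdiff : expVal p (fun o => c * ∑ d, (if o d then (1 : ℝ) else 0) * e d / max (p d) τ)
      - c * ∑ d, e d
      = -(c * ∑ d ∈ univ.filter (fun d => p d < τ), e d * (τ - p d) / τ) := by
    rw [hE, ← mul_sub, ← Finset.sum_sub_distrib]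
    have : ∑ d, (p d * (e d / max (p d) τ) - e d)
        = ∑ d, (if p d < τ then -(e d * (τ - p d) / τ) else 0) := by
      exact Finset.sum_congr rfl fun d _ => hterm d
    rw [this, Finset.sum_ite, Finset.sum_const_zero, add_zero, Finset.sum_neg_distrib]
    ring
  have hBnn : 0 ≤ ∑ d ∈ univ.filter (fun d => p d < τ), e d * (τ - p d) / τ := by
    apply Finset.sum_nonneg
    intro d hd
    rw [Finset.mem_filter] at hd
    exact div_nonneg (mul_nonneg (he d) (by linarith [hd.2])) hτ.1.le
  constructor
  · rw [hdiff, abs_neg, abs_of_nonneg (by positivity)]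
  · intro hτp
    have hempty : univ.filter (fun d => p d < τ) = ∅ := by
      apply Finset.filter_eq_empty_iff.mpr
      intro d _
      exact not_lt.mpr (hτp d)
    have := hdiff
    rw [hempty, Finset.sum_empty, mul_zero, neg_zero, sub_eq_zero] at this
    exact this
end
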